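/- arXiv:1904.09841 — 2 statements merged into one kernel-verified Lean document; each statement's English description precedes it below -/
import Mathlib

section
/- Let A ∈ ℝ^{n×n}, W ∈ {0,1}^{n×n}, and let ‖·‖_* be an entrywise matrix norm. Let W_Π ∈ {0,1}^{n×n} be a binary matrix whose support {(i,j) : (W_Π)_{i,j} = 1} can be partitioned into at most r combinatorial rectangles. Let OPT = min over matrices L̂ of rank at most k of ‖(A − L̂) ∘ W‖_*, achieved by a rank-at-most-k matrix L_opt. Then for every k' ≥ k·r and every matrix L of rank at most k' satisfying ‖A ∘ W − L‖_* ≤ (min over matrices L̂ of rank at most k' of ‖A ∘ W − L̂‖_*) + Δ for some Δ ≥ 0, it holds that ‖(A − L) ∘ W‖_* ≤ OPT + ‖A ∘ W ∘ (1 − W_Π)‖_* + ‖L_opt ∘ (1 − W) ∘ W_Π‖_* + Δ. -/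
open Matrix BigOperators

/-- Entrywise matrix norm induced by `g`: `‖M‖_* = ∑_{i,j} g |M_{i,j}|`. -/
noncomputable def enorm {n p : ℕ} (g : ℝ → ℝ) (M : Matrix (Fin n) (Fin p) ℝ) : ℝ :=
  ∑ i, ∑ j, g |M i j|

/-- The entrywise complement `1 - W` of a binary matrix `W`. -/
def oneSub {n p : ℕ} (W : Matrix (Fin n) (Fin p) ℝ) : Matrix (Fin n) (Fin p) ℝ :=
  Matrix.of fun i j => 1 - W i j

lemma enorm_nonneg {n p : ℕ} (g : ℝ → ℝ) (hg : ∀ x : ℝ, 0 ≤ x → 0 ≤ g x)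
    (M : Matrix (Fin n) (Fin p) ℝ) : 0 ≤ enorm g M := by
  refine Finset.sum_nonneg fun i _ => Finset.sum_nonneg fun j _ => hg _ (abs_nonneg _)

lemma rank_add_le' {m : ℕ} (A B : Matrix (Fin m) (Fin m) ℝ) :
    (A + B).rank ≤ A.rank + B.rank := by
  simp only [Matrix.rank]
  have hle : LinearMap.range (A + B).mulVecLin ≤
      LinearMap.range A.mulVecLin ⊔ LinearMap.range B.mulVecLin := by
    rintro x ⟨v, rfl⟩
    exact Submodule.mem_sup.2 ⟨A.mulVecLin v, ⟨v, rfl⟩, B.mulVecLin v, ⟨v, rfl⟩, by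
      simp [Matrix.mulVecLin, Matrix.add_mulVec]⟩
  calc Module.finrank ℝ (LinearMap.range (A + B).mulVecLin)
      ≤ Module.finrank ℝ ↥(LinearMap.range A.mulVecLin ⊔ LinearMap.range B.mulVecLin) :=
        Submodule.finrank_mono hle
    _ ≤ _ := Submodule.finrank_add_le_finrank_add_finrank _ _

lemma rank_sum_le {m r : ℕ} (M : Fin r → Matrix (Fin m) (Fin m) ℝ) :
    (∑ c, M c).rank ≤ ∑ c, (M c).rank := by
  classical
  induction r with
  | zero => simp [Matrix.rank]
  | succ r ih =>
      rw [Fin.sum_univ_succ, Fin.sum_univ_succ]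
      calc (M 0 + ∑ c : Fin r, M c.succ).rank
          ≤ (M 0).rank + (∑ c : Fin r, M c.succ).rank := rank_add_le' _ _
        _ ≤ _ := by exact Nat.add_le_add_left (ih _) _

/-- bicriteria masked low-rank approximation relative to a binary matrix `Wpi`
whose support is partitioned into at most `r` combinatorial rectangles. -/
theorem stmt1
    {n k k' r : ℕ}
    (A W Wpi : Matrix (Fin n) (Fin n) ℝ)
    (hWbin : ∀ i j, W i j = 0 ∨ W i j = 1)
    (hWpibin : ∀ i j, Wpi i j = 0 ∨ Wpi i j = 1)
    (g : ℝ → ℝ) (hg0 : g 0 = 0)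
    (hg_nonneg : ∀ x : ℝ, 0 ≤ x → 0 ≤ g x)
    (hg_mono : ∀ x y : ℝ, 0 ≤ x → x ≤ y → g x ≤ g y)
    (Δ : ℝ) (hΔ : 0 ≤ Δ)
    -- the support of `Wpi` is partitioned into the rectangles `S c ×ˢ T c`, `c : Fin r`
    (S T : Fin r → Set (Fin n))
    (h_cover : ∀ i j, Wpi i j = 1 ↔ ∃ c, i ∈ S c ∧ j ∈ T c)
    (h_disj : ∀ (c c' : Fin r) (i j : Fin n),
      (i ∈ S c ∧ j ∈ T c) → (i ∈ S c' ∧ j ∈ T c') → c = c')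
    -- `Lopt` achieves `OPT`, the min over rank-at-most-`k` matrices
    (Lopt : Matrix (Fin n) (Fin n) ℝ) (hLopt_rank : Lopt.rank ≤ k)
    (hLopt_opt : ∀ M : Matrix (Fin n) (Fin n) ℝ, M.rank ≤ k →
      enorm g (Matrix.hadamard (A - Lopt) W) ≤ enorm g (Matrix.hadamard (A - M) W))
    (hk' : k * r ≤ k')
    (L : Matrix (Fin n) (Fin n) ℝ) (hL_rank : L.rank ≤ k')
    (hL_near : enorm g (Matrix.hadamard A W - L) ≤
      sInf {x : ℝ | ∃ M : Matrix (Fin n) (Fin n) ℝ, M.rank ≤ k' ∧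
        x = enorm g (Matrix.hadamard A W - M)} + Δ) :
    enorm g (Matrix.hadamard (A - L) W) ≤
      enorm g (Matrix.hadamard (A - Lopt) W)
        + enorm g (Matrix.hadamard (Matrix.hadamard A W) (oneSub Wpi))
        + enorm g (Matrix.hadamard (Matrix.hadamard Lopt (oneSub W)) Wpi) + Δ := by
  classical
  -- the candidate matrix `Lopt ∘ Wpi`
  set C : Matrix (Fin n) (Fin n) ℝ := Matrix.hadamard Lopt Wpi with hC
  -- decompose `C` as a sum over rectangles
  have hWpi_sum : ∀ i j, Wpi i j =
      ∑ c : Fin r, (if i ∈ S c then (1:ℝ) else 0) * (if j ∈ T c then (1:ℝ) else 0) := by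
    intro i j
    rcases hWpibin i j with h0 | h1
    · rw [h0]
      symm
      apply Finset.sum_eq_zero
      intro c _
      by_contra hc
      have hmem : i ∈ S c ∧ j ∈ T c := by
        by_contra hmem
        push_neg at hmem
        rcases Classical.em (i ∈ S c) with hi | hi
        · simp [hi, hmem hi] at hc
        · simp [hi] at hc
      have := (h_cover i j).2 ⟨c, hmem⟩
      rw [h0] at this; norm_num at this
    · rw [h1]
      obtain ⟨c, hc⟩ := (h_cover i j).1 h1
      rw [Finset.sum_eq_single c]
      · simp [hc.1, hc.2]
      · intro c' _ hne
        rcases Classical.em (i ∈ S c' ∧ j ∈ T c') with h | h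
        · exact absurd (h_disj c' c i j h hc) hne
        · push_neg at h
          rcases Classical.em (i ∈ S c') with hi | hi
          · simp [hi, h hi]
          · simp [hi]
      · intro habs; exact absurd (Finset.mem_univ c) habs
  -- rank bound for `C`
  have hC_rank : C.rank ≤ k' := by
    have hdecomp : C = ∑ c : Fin r,
        (Matrix.diagonal (fun i => if i ∈ S c then (1:ℝ) else 0)) * Lopt *
          (Matrix.diagonal (fun j => if j ∈ T c then (1:ℝ) else 0)) := by
      ext i j
      simp only [hC, Matrix.hadamard_apply, Matrix.sum_apply, Matrix.mul_diagonal,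
        Matrix.diagonal_mul]
      rw [hWpi_sum i j, Finset.mul_sum]
      exact Finset.sum_congr rfl fun c _ => by ring
    calc C.rank ≤ ∑ c : Fin r,
          ((Matrix.diagonal (fun i => if i ∈ S c then (1:ℝ) else 0)) * Lopt *
            (Matrix.diagonal (fun j => if j ∈ T c then (1:ℝ) else 0))).rank := by
            rw [hdecomp]; exact rank_sum_le _
      _ ≤ ∑ _c : Fin r, k := by
            refine Finset.sum_le_sum fun c _ => ?_
            calc ((Matrix.diagonal _ * Lopt) * Matrix.diagonal _).rank
                ≤ (Matrix.diagonal _ * Lopt).rank := Matrix.rank_mul_le_left _ _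
              _ ≤ Lopt.rank := Matrix.rank_mul_le_right _ _
              _ ≤ k := hLopt_rank
      _ = k * r := by simp [mul_comm]
      _ ≤ k' := hk'
  -- `sInf ≤ enorm g (A∘W - C)`
  have h_inf_le : sInf {x : ℝ | ∃ M : Matrix (Fin n) (Fin n) ℝ, M.rank ≤ k' ∧
      x = enorm g (Matrix.hadamard A W - M)} ≤ enorm g (Matrix.hadamard A W - C) := by
    apply csInf_le
    · refine ⟨0, ?_⟩
      rintro x ⟨M, _, rfl⟩
      exact enorm_nonneg g hg_nonneg _
    · exact ⟨C, hC_rank, rfl⟩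
  -- step 1 : `‖(A-L)∘W‖ ≤ ‖A∘W - L‖`
  have h1 : enorm g (Matrix.hadamard (A - L) W) ≤ enorm g (Matrix.hadamard A W - L) := by
    refine Finset.sum_le_sum fun i _ => Finset.sum_le_sum fun j _ => ?_
    apply hg_mono _ _ (abs_nonneg _)
    simp only [Matrix.hadamard_apply, Matrix.sub_apply]
    rcases hWbin i j with h0 | h1
    · simp [h0, abs_nonneg]
    · simp [h1]
  -- step 2 : entrywise bound `‖A∘W - C‖ ≤ ‖(A-Lopt)∘W‖ + term2 + term3`
  have h2 : enorm g (Matrix.hadamard A W - C) ≤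
      enorm g (Matrix.hadamard (A - Lopt) W)
        + enorm g (Matrix.hadamard (Matrix.hadamard A W) (oneSub Wpi))
        + enorm g (Matrix.hadamard (Matrix.hadamard Lopt (oneSub W)) Wpi) := by
    unfold _root_.enorm
    rw [← Finset.sum_add_distrib, ← Finset.sum_add_distrib]
    refine Finset.sum_le_sum fun i _ => ?_
    rw [← Finset.sum_add_distrib, ← Finset.sum_add_distrib]
    refine Finset.sum_le_sum fun j _ => ?_
    simp only [hC, Matrix.hadamard_apply, Matrix.sub_apply, oneSub, Matrix.of_apply]
    rcases hWbin i j with hW | hW <;> rcases hWpibin i j with hP | hP <;>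
      simp only [hW, hP, mul_zero, mul_one, zero_mul, one_mul, sub_zero, zero_sub,
        sub_self, abs_zero, abs_neg, hg0, add_zero, zero_add] <;>
      linarith [hg_nonneg |A i j - Lopt i j| (abs_nonneg _),
        hg_nonneg |A i j| (abs_nonneg _), hg_nonneg |Lopt i j| (abs_nonneg _)]
  linarith [hL_near, h_inf_le, h1, h2]
end

section
/- Subsampled Toeplitz masks: Let A ∈ ℝ^{n×n}, let p ≥ 1 be an integer, and let W ∈ {0,1}^{n×n} be the Toeplitz mask with W_{i,j} = 0 if and only if i ≡ j (mod p). Then for every k' ≥ 4pk and every matrix L of rank at most k' satisfying ‖A ∘ W − L‖_F² ≤ (min over matrices L̂ of rank at most k' of ‖A ∘ W − L̂‖_F²) + Δ for some Δ ≥ 0, it holds that ‖(A − L) ∘ W‖_F² ≤ OPT + Δ, where OPT = min over matrices L̂ of rank at most k of ‖(A − L̂) ∘ W‖_F². -/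
open Matrix BigOperators

/-- Squared Frobenius norm. -/
noncomputable def frob2 {n p : ℕ} (M : Matrix (Fin n) (Fin p) ℝ) : ℝ :=
  ∑ i, ∑ j, (M i j) ^ 2

lemma frob2_nonneg {n p : ℕ} (M : Matrix (Fin n) (Fin p) ℝ) : 0 ≤ frob2 M :=
  Finset.sum_nonneg fun _ _ => Finset.sum_nonneg fun _ _ => sq_nonneg _

lemma myrank_add_le {n : ℕ} (A B : Matrix (Fin n) (Fin n) ℝ) :
    (A + B).rank ≤ A.rank + B.rank := by
  rw [Matrix.rank, Matrix.rank, Matrix.rank]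
  have h : LinearMap.range (A + B).mulVecLin ≤
      LinearMap.range A.mulVecLin ⊔ LinearMap.range B.mulVecLin := by
    rw [Matrix.mulVecLin_add]
    rintro x ⟨v, rfl⟩
    exact Submodule.add_mem_sup (LinearMap.mem_range_self _ v) (LinearMap.mem_range_self _ v)
  exact (Submodule.finrank_mono h).trans
    (Submodule.finrank_add_le_finrank_add_finrank _ _)

lemma myrank_neg_le {n : ℕ} (B : Matrix (Fin n) (Fin n) ℝ) : (-B).rank ≤ B.rank := by
  have h : -B = B * (-1) := by simp
  rw [h]; exact Matrix.rank_mul_le_left B (-1)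

lemma myrank_sub_le {n : ℕ} (A B : Matrix (Fin n) (Fin n) ℝ) :
    (A - B).rank ≤ A.rank + B.rank := by
  rw [sub_eq_add_neg]
  exact (myrank_add_le A (-B)).trans (by exact add_le_add_right (myrank_neg_le B) _)

lemma myrank_sum_le {n : ℕ} {ι : Type*} (s : Finset ι) (f : ι → Matrix (Fin n) (Fin n) ℝ) :
    (∑ r ∈ s, f r).rank ≤ ∑ r ∈ s, (f r).rank := by
  classical
  induction s using Finset.cons_induction with
  | empty => simp [Matrix.rank_zero]
  | cons a s ha ih =>
    rw [Finset.sum_cons, Finset.sum_cons]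
    exact (myrank_add_le _ _).trans (add_le_add_right ih _)

lemma mymod_iff {p : ℕ} (i j : ℕ) :
    ((p:ℤ) ∣ ((i:ℤ) - (j:ℤ))) ↔ i % p = j % p := by
  rw [Int.dvd_iff_emod_eq_zero, ← Int.emod_eq_emod_iff_emod_sub_eq_zero,
    ← Int.natCast_mod, ← Int.natCast_mod, Nat.cast_inj]

lemma mask_decomp {n p : ℕ} (hp : 1 ≤ p)
    (W : Matrix (Fin n) (Fin n) ℝ)
    (hWbin : ∀ i j, W i j = 0 ∨ W i j = 1)
    (hW : ∀ i j : Fin n, W i j = 0 ↔ (p : ℤ) ∣ ((i : ℤ) - (j : ℤ)))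
    (M : Matrix (Fin n) (Fin n) ℝ) :
    Matrix.hadamard M W =
      M - ∑ r : Fin p,
        (Matrix.diagonal (fun i : Fin n => if (i:ℕ) % p = (r:ℕ) then (1:ℝ) else 0)) * M *
        (Matrix.diagonal (fun i : Fin n => if (i:ℕ) % p = (r:ℕ) then (1:ℝ) else 0)) := by
  ext i j
  have hsum : (∑ r : Fin p,
      (Matrix.diagonal (fun i : Fin n => if (i:ℕ) % p = (r:ℕ) then (1:ℝ) else 0)) * M *
      (Matrix.diagonal (fun i : Fin n => if (i:ℕ) % p = (r:ℕ) then (1:ℝ) else 0))) i j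
      = ∑ r : Fin p, (if (i:ℕ) % p = (r:ℕ) then (1:ℝ) else 0) * M i j *
          (if (j:ℕ) % p = (r:ℕ) then (1:ℝ) else 0) := by
    rw [Matrix.sum_apply]
    congr 1; ext r
    rw [Matrix.mul_diagonal, Matrix.diagonal_mul]
  rw [Matrix.sub_apply, hsum, Matrix.hadamard_apply]
  by_cases h : (i:ℕ) % p = (j:ℕ) % p
  · have hW0 : W i j = 0 := (hW i j).2 ((mymod_iff _ _).2 h)
    rw [hW0, mul_zero]
    have : (∑ r : Fin p, (if (i:ℕ) % p = (r:ℕ) then (1:ℝ) else 0) * M i j *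
        (if (j:ℕ) % p = (r:ℕ) then (1:ℝ) else 0)) = M i j := by
      rw [Finset.sum_eq_single (⟨(i:ℕ) % p, Nat.mod_lt _ hp⟩ : Fin p)]
      · simp [h]
      · intro r _ hr
        have : ¬ ((i:ℕ) % p = (r:ℕ)) := by
          intro hc
          apply hr
          apply Fin.ext
          simp [← hc]
        simp [this]
      · simp
    rw [this]; ring
  · have hW1 : W i j = 1 := by
      rcases hWbin i j with h0 | h1
      · exact absurd ((mymod_iff _ _).1 ((hW i j).1 h0)) h
      · exact h1
    rw [hW1, mul_one]
    have : (∑ r : Fin p, (if (i:ℕ) % p = (r:ℕ) then (1:ℝ) else 0) * M i j *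
        (if (j:ℕ) % p = (r:ℕ) then (1:ℝ) else 0)) = 0 := by
      apply Finset.sum_eq_zero
      intro r _
      by_cases hi : (i:ℕ) % p = (r:ℕ)
      · have hj : ¬ ((j:ℕ) % p = (r:ℕ)) := fun hc => h (by rw [hi, hc])
        simp [hj]
      · simp [hi]
    rw [this]; ring

lemma hadamard_rank_le {n k p : ℕ} (hp : 1 ≤ p)
    (W : Matrix (Fin n) (Fin n) ℝ)
    (hWbin : ∀ i j, W i j = 0 ∨ W i j = 1)
    (hW : ∀ i j : Fin n, W i j = 0 ↔ (p : ℤ) ∣ ((i : ℤ) - (j : ℤ)))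
    (M : Matrix (Fin n) (Fin n) ℝ) (hM : M.rank ≤ k) :
    (Matrix.hadamard M W).rank ≤ 4 * p * k := by
  rw [mask_decomp hp W hWbin hW M]
  have h1 : (∑ r : Fin p,
      (Matrix.diagonal (fun i : Fin n => if (i:ℕ) % p = (r:ℕ) then (1:ℝ) else 0)) * M *
      (Matrix.diagonal (fun i : Fin n => if (i:ℕ) % p = (r:ℕ) then (1:ℝ) else 0))).rank
      ≤ p * k := by
    refine (myrank_sum_le _ _).trans ?_
    calc (∑ r : Fin p,
        ((Matrix.diagonal (fun i : Fin n => if (i:ℕ) % p = (r:ℕ) then (1:ℝ) else 0)) * M *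
        (Matrix.diagonal (fun i : Fin n => if (i:ℕ) % p = (r:ℕ) then (1:ℝ) else 0))).rank)
        ≤ ∑ _r : Fin p, k := by
          refine Finset.sum_le_sum fun r _ => ?_
          refine le_trans (Matrix.rank_mul_le_left _ _) ?_
          exact le_trans (Matrix.rank_mul_le_right _ _) hM
      _ = p * k := by simp [Finset.sum_const, mul_comm]
  refine (myrank_sub_le _ _).trans ?_
  have : M.rank + (∑ r : Fin p,
      (Matrix.diagonal (fun i : Fin n => if (i:ℕ) % p = (r:ℕ) then (1:ℝ) else 0)) * M *
      (Matrix.diagonal (fun i : Fin n => if (i:ℕ) % p = (r:ℕ) then (1:ℝ) else 0))).rank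
      ≤ k + p * k := add_le_add hM h1
  refine this.trans ?_
  nlinarith [hp, Nat.zero_le k]

/-- subsampled Toeplitz masks, `W_{i,j} = 0` iff `i ≡ j (mod p)`. -/
theorem stmt5
    {n k k' p : ℕ} (hp : 1 ≤ p)
    (A : Matrix (Fin n) (Fin n) ℝ)
    (W : Matrix (Fin n) (Fin n) ℝ)
    (hWbin : ∀ i j, W i j = 0 ∨ W i j = 1)
    (hW : ∀ i j : Fin n, W i j = 0 ↔ (p : ℤ) ∣ ((i : ℤ) - (j : ℤ)))
    (hk' : 4 * p * k ≤ k')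
    (Δ : ℝ) (hΔ : 0 ≤ Δ)
    (L : Matrix (Fin n) (Fin n) ℝ) (hL_rank : L.rank ≤ k')
    (hL_near : frob2 (Matrix.hadamard A W - L) ≤
      sInf {x : ℝ | ∃ M : Matrix (Fin n) (Fin n) ℝ, M.rank ≤ k' ∧
        x = frob2 (Matrix.hadamard A W - M)} + Δ) :
    frob2 (Matrix.hadamard (A - L) W) ≤
      sInf {x : ℝ | ∃ M : Matrix (Fin n) (Fin n) ℝ, M.rank ≤ k ∧
        x = frob2 (Matrix.hadamard (A - M) W)} + Δ := by
  set S' : Set ℝ := {x : ℝ | ∃ M : Matrix (Fin n) (Fin n) ℝ, M.rank ≤ k' ∧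
    x = frob2 (Matrix.hadamard A W - M)} with hS'
  set S : Set ℝ := {x : ℝ | ∃ M : Matrix (Fin n) (Fin n) ℝ, M.rank ≤ k ∧
    x = frob2 (Matrix.hadamard (A - M) W)} with hS
  -- step 1: pointwise bound
  have step1 : frob2 (Matrix.hadamard (A - L) W) ≤ frob2 (Matrix.hadamard A W - L) := by
    unfold frob2
    refine Finset.sum_le_sum fun i _ => Finset.sum_le_sum fun j _ => ?_
    rcases hWbin i j with h0 | h1
    · simp [Matrix.hadamard_apply, Matrix.sub_apply, h0, sq_nonneg]
    · simp [Matrix.hadamard_apply, Matrix.sub_apply, h1]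
  -- step 2: S ⊆ S'
  have hsub : S ⊆ S' := by
    rintro x ⟨M, hMrank, rfl⟩
    refine ⟨Matrix.hadamard M W, ?_, ?_⟩
    · exact le_trans (hadamard_rank_le hp W hWbin hW M hMrank) hk'
    · congr 1
      ext i j
      simp [Matrix.hadamard_apply, Matrix.sub_apply]
      ring
  have hSne : S.Nonempty := by
    refine ⟨frob2 (Matrix.hadamard (A - 0) W), 0, ?_, rfl⟩
    simp [Matrix.rank_zero]
  have hbdd : BddBelow S' := by
    refine ⟨0, ?_⟩
    rintro x ⟨M, _, rfl⟩
    exact frob2_nonneg _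
  have hinf : sInf S' ≤ sInf S := csInf_le_csInf hbdd hSne hsub
  calc frob2 (Matrix.hadamard (A - L) W)
      ≤ frob2 (Matrix.hadamard A W - L) := step1
    _ ≤ sInf S' + Δ := hL_near
    _ ≤ sInf S + Δ := add_le_add_left hinf Δ
end
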